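/- Let τ > 0 and suppose F : ℝ → ℝ is bounded with |F(x)| ≤ M. Any solution x : [0,T] → ℝ of x' = -(1/τ + F(x))x + A·F(x) satisfies |x(t)| ≤ max(|x(0)|, τ·|A|·M/(1 - τ·M)) for all t, provided τ·M < 1. -/

import Mathlib

/-- Boundedness of LTC trajectories: if `|F| ≤ M` and `τ·M < 1`, then any
solution satisfies `|x(t)| ≤ max (|x 0|) (τ·|A|·M/(1 - τ·M))`. -/
theorem stmt_3 (τ A M T : ℝ) (hτ : 0 < τ) (hM : 0 ≤ M) (hτM : τ * M < 1)
    (hT : 0 ≤ T) (F : ℝ → ℝ) (hF : ∀ x, |F x| ≤ M)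
    (x : ℝ → ℝ)
    (hx : ∀ t ∈ Set.Icc (0 : ℝ) T,
      HasDerivAt x (-(1 / τ + F (x t)) * x t + A * F (x t)) t) :
    ∀ t ∈ Set.Icc (0 : ℝ) T,
      |x t| ≤ max (|x 0|) (τ * |A| * M / (1 - τ * M)) := by
  set C : ℝ := τ * |A| * M / (1 - τ * M) with hC
  set b : ℝ := max (|x 0|) C with hb
  have h1 : 0 < 1 - τ * M := by linarith
  have hk : M < 1 / τ := by
    rw [lt_div_iff₀ hτ]; linarith
  have hC0 : 0 ≤ C := by
    apply div_nonneg _ h1.le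
    positivity
  have hb0 : 0 ≤ b := le_trans hC0 (le_max_right _ _)
  have hCb : C ≤ b := le_max_right _ _
  -- key: C * (1/τ - M) = |A| * M
  have hkey : C * (1 / τ - M) = |A| * M := by
    rw [hC]
    field_simp
  intro t ht
  -- it suffices to show x t ^ 2 ≤ b ^ 2
  suffices hsq : x t ^ 2 ≤ b ^ 2 by
    nlinarith [abs_nonneg (x t), sq_abs (x t)]
  -- for every ε > 0, x t ^ 2 ≤ b ^ 2 + ε * (1 + t)
  have hmain : ∀ ε > 0, x t ^ 2 ≤ b ^ 2 + ε * (1 + t) := by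
    intro ε hε
    have := image_le_of_deriv_right_lt_deriv_boundary
      (f := fun t => x t ^ 2)
      (f' := fun t => 2 * x t * (-(1 / τ + F (x t)) * x t + A * F (x t)))
      (a := 0) (b := T)
      (B := fun t => b ^ 2 + ε * (1 + t)) (B' := fun _ => ε) ?_ ?_ ?_ ?_ ?_ ht
    · exact this
    · intro s hs
      exact ((hx s hs).continuousAt.continuousWithinAt).pow 2
    · intro s hs
      have := ((hx s (Set.Ico_subset_Icc_self hs)).pow 2).hasDerivWithinAt (s := Set.Ici s)
      exact this.congr_deriv (by ring)
    · simp
      nlinarith [le_max_left (|x 0|) C, abs_nonneg (x 0), sq_abs (x 0)]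
    · intro s
      simpa using ((((hasDerivAt_id s).const_add (1:ℝ)).const_mul ε).const_add (b ^ 2))
    · intro s hs heq
      -- here x s ^ 2 = b^2 + ε(1+s) > C^2, so |x s| > C
      have heq' : x s ^ 2 = b ^ 2 + ε * (1 + s) := heq
      have hlt : C ^ 2 < x s ^ 2 := by
        have hs0 : 0 ≤ s := hs.1
        have h7 : C ^ 2 ≤ b ^ 2 := pow_le_pow_left₀ hC0 hCb 2
        nlinarith
      have habs : C < |x s| := by
        nlinarith [abs_nonneg (x s), sq_abs (x s)]
      have hxpos : 0 < |x s| := lt_of_le_of_lt hC0 habs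
      have hFs := hF (x s)
      have h2 : 2 * x s * (-(1 / τ + F (x s)) * x s + A * F (x s))
          ≤ 2 * |x s| * (-(1 / τ - M) * |x s| + |A| * M) := by
        have h3 : x s * x s = |x s| * |x s| := by
          rw [← abs_mul_abs_self]
        have h4 : -(F (x s)) * (x s * x s) ≤ M * (|x s| * |x s|) := by
          rw [h3]
          have := (abs_le.mp hFs).1
          nlinarith [mul_self_nonneg (|x s|)]
        have h5 : A * F (x s) * x s ≤ |A| * M * |x s| := by
          calc A * F (x s) * x s ≤ |A * F (x s) * x s| := le_abs_self _
            _ = |A| * |F (x s)| * |x s| := by rw [abs_mul, abs_mul]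
            _ ≤ |A| * M * |x s| := by
                apply mul_le_mul_of_nonneg_right _ (abs_nonneg _)
                exact mul_le_mul_of_nonneg_left hFs (abs_nonneg _)
        nlinarith
      have h6 : -(1 / τ - M) * |x s| + |A| * M < 0 := by
        have : |A| * M < (1 / τ - M) * |x s| := by
          calc |A| * M = C * (1 / τ - M) := hkey.symm
            _ < |x s| * (1 / τ - M) := by
                apply mul_lt_mul_of_pos_right habs; linarith
            _ = (1 / τ - M) * |x s| := by ring
        linarith
      calc 2 * x s * (-(1 / τ + F (x s)) * x s + A * F (x s))
          ≤ 2 * |x s| * (-(1 / τ - M) * |x s| + |A| * M) := h2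
        _ < 0 := by nlinarith
        _ < ε := hε
  have h1T : (0:ℝ) < 1 + T := by linarith
  refine le_of_forall_pos_le_add fun ε' hε' => ?_
  have h := hmain (ε' / (1 + T)) (by positivity)
  have h2 : ε' / (1 + T) * (1 + t) ≤ ε' := by
    rw [div_mul_eq_mul_div, div_le_iff₀ h1T]
    have h3 := ht.1
    have h4 := ht.2
    nlinarith
  linarith
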